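/- Let V = V_1 ⊕ ... ⊕ V_k with dim V_a = n_a and n = Σ n_a. Let 𝔫 ⊂ End(V) be the nilpotent subalgebra of maps sending V_i into ⊕_{j<i} V_j (strictly block lower-triangular with respect to the flag F_i = V_1⊕...⊕V_i). Let m_0 ≤ ... ≤ m_{n-1} be the fundamental degrees of the Levi ⊕_a End(V_a), i.e., the nondecreasing rearrangement of the multiset {1,...,n_1, 1,...,n_2, ..., 1,...,n_k}. Then for any x_1,...,x_j ∈ End(V), the polarized characteristic coefficient c_j(x_1,...,x_j) vanishes whenever at least j+1−m_{j-1} of the x_i belong to 𝔫. -/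

import Mathlib

open Matrix Polynomial

/-- `c_j(A)`: the coefficient of `λ^(card ι - j)` in the characteristic polynomial
`det(λ I - A)` of a matrix `A` indexed by a finite type `ι`. -/
noncomputable def charCoeff' {ι : Type*} [Fintype ι] [DecidableEq ι]
    (j : ℕ) (A : Matrix ι ι ℂ) : ℂ :=
  A.charpoly.coeff (Fintype.card ι - j)

/-- The symmetric multilinear polarization of `c_j`, via the standard polarization
formula, so that `polarization' j (fun _ => A) = c_j(A)`. -/
noncomputable def polarization' {ι : Type*} [Fintype ι] [DecidableEq ι]
    (j : ℕ) (x : Fin j → Matrix ι ι ℂ) : ℂ :=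
  ((Nat.factorial j : ℕ) : ℂ)⁻¹ *
    ∑ S : Finset (Fin j), (-1 : ℂ) ^ (j - S.card) * charCoeff' j (∑ i ∈ S, x i)

section Aux

variable {ι : Type*} [Fintype ι] [DecidableEq ι]

variable {ι : Type*} [Fintype ι] [DecidableEq ι]

lemma det_piecewise_single {R : Type*} [CommRing R] (S : Finset ι) (b : ι → ι → R) :
    Matrix.det (Matrix.of (S.piecewise (fun p => Pi.single p 1) b)) =
      Matrix.det (Matrix.of (fun p q : {a // ¬ a ∈ S} => b p.1 q.1)) := by
  let e := Equiv.sumCompl (fun a => a ∈ S)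
  rw [← Matrix.det_submatrix_equiv_self e]
  have : (Matrix.of (S.piecewise (fun p => Pi.single p 1) b)).submatrix e e =
      Matrix.fromBlocks 1 0 (Matrix.of fun (p : {a // ¬ a ∈ S}) (q : {a // a ∈ S}) => b p.1 q.1)
        (Matrix.of fun p q : {a // ¬ a ∈ S} => b p.1 q.1) := by
    ext p q
    cases p with
    | inl p =>
      cases q with
      | inl q =>
        show S.piecewise (fun p => Pi.single p 1) b p.1 q.1 = (1 : Matrix _ _ R) p q
        rw [Finset.piecewise_eq_of_mem _ _ _ p.2, Pi.single_apply, Matrix.one_apply]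
        exact if_congr ⟨fun h => Subtype.ext h.symm, fun h => h ▸ rfl⟩ rfl rfl
      | inr q =>
        have : (p : ι) ≠ (q : ι) := fun h => q.2 (h ▸ p.2)
        simp [Matrix.submatrix, e, Finset.piecewise_eq_of_mem _ _ _ p.2, Pi.single_apply, this]
    | inr p =>
      cases q with
      | inl q => simp [Matrix.submatrix, e, Finset.piecewise_eq_of_notMem _ _ _ p.2]
      | inr q => simp [Matrix.submatrix, e, Finset.piecewise_eq_of_notMem _ _ _ p.2]
  rw [this, Matrix.det_fromBlocks_zero₁₂]
  simp

lemma charpoly_eq_sum (A : Matrix ι ι ℂ) :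
    A.charpoly = ∑ S : Finset ι,
      (X : ℂ[X]) ^ S.card *
        C ((-1) ^ (Fintype.card {a // ¬ a ∈ S}) *
          Matrix.det (Matrix.of fun p q : {a // ¬ a ∈ S} => A p.1 q.1)) := by
  set a : ι → ι → ℂ[X] := fun p => (X : ℂ[X]) • (Pi.single p (1:ℂ[X]) : ι → ℂ[X]) with ha
  set b : ι → ι → ℂ[X] := fun p q => -C (A p q) with hb
  have hcm : Matrix.charpoly A = (Matrix.detRowAlternating (R := ℂ[X]) (n := ι)) (a + b) := by
    rw [Matrix.charpoly]
    congr 1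
    ext p q
    by_cases h : p = q
    · subst h
      simp [Matrix.charmatrix_apply_eq, a, b, Pi.single_apply, sub_eq_add_neg]
    · simp [Matrix.charmatrix_apply_ne _ _ _ h, a, b, Pi.single_apply, Ne.symm h]
  rw [hcm,
    show (Matrix.detRowAlternating (a + b) : ℂ[X]) =
      (Matrix.detRowAlternating (R := ℂ[X]) (n := ι)).toMultilinearMap (a + b) from rfl,
    (Matrix.detRowAlternating (R := ℂ[X]) (n := ι)).toMultilinearMap.map_add_univ a b]
  refine Finset.sum_congr rfl fun S _ => ?_
  have key : S.piecewise a b =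
      S.piecewise (fun p => (X:ℂ[X]) • (S.piecewise (fun p => Pi.single p 1) b) p)
        (S.piecewise (fun p => Pi.single p 1) b) := by
    funext p
    by_cases h : p ∈ S
    · simp [Finset.piecewise_eq_of_mem _ _ _ h, a]
    · simp [Finset.piecewise_eq_of_notMem _ _ _ h]
  rw [key, MultilinearMap.map_piecewise_smul]
  have h2 : (Matrix.detRowAlternating (R := ℂ[X]) (n := ι)).toMultilinearMap
      (S.piecewise (fun p => Pi.single p 1) b) =
      Matrix.det (Matrix.of (S.piecewise (fun p => Pi.single p 1) b)) := rfl
  rw [h2, det_piecewise_single S b]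
  have h3 : Matrix.of (fun p q : {a // ¬ a ∈ S} => b p.1 q.1) =
      -(Matrix.of (fun p q : {a // ¬ a ∈ S} => A p.1 q.1)).map C := by
    ext p q; simp [b]
  rw [h3, Matrix.det_neg]
  have h4 : ((Matrix.of fun p q : {a // ¬ a ∈ S} => A p.1 q.1).map ⇑C).det =
      C (Matrix.of fun p q : {a // ¬ a ∈ S} => A p.1 q.1).det := by
    rw [← RingHom.mapMatrix_apply]
    exact ((C : ℂ →+* ℂ[X]).map_det _).symm
  rw [h4]
  simp only [Finset.prod_const, smul_eq_mul, _root_.map_mul, map_pow, _root_.map_neg,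
    _root_.map_one]


variable {ι : Type*} [Fintype ι] [DecidableEq ι]


lemma charCoeff'_eq (A : Matrix ι ι ℂ) (j : ℕ) (hjn : j ≤ Fintype.card ι) :
    charCoeff' j A = (-1) ^ j * ∑ W : Finset ι,
      (if W.card = j then Matrix.det (Matrix.of fun p q : {a // a ∈ W} => A p.1 q.1) else 0) := by
  set n := Fintype.card ι with hn
  set c : Finset ι → ℂ := fun S => (-1) ^ (Fintype.card {a // ¬ a ∈ S}) *
      Matrix.det (Matrix.of fun p q : {a // ¬ a ∈ S} => A p.1 q.1) with hc
  have h1 : charCoeff' j A = ∑ S : Finset ι, (if S.card = n - j then c S else 0) := by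
    rw [charCoeff', charpoly_eq_sum, Polynomial.finset_sum_coeff]
    refine Finset.sum_congr rfl fun S _ => ?_
    rw [mul_comm, Polynomial.coeff_C_mul, Polynomial.coeff_X_pow]
    by_cases h : S.card = n - j
    · rw [if_pos h.symm, if_pos h, mul_one]
    · rw [if_neg (fun hh => h hh.symm), if_neg h, mul_zero]
  rw [h1, ← Function.Bijective.sum_comp (compl_involutive.bijective) (fun S => _)]
  rw [Finset.mul_sum]
  refine Finset.sum_congr rfl fun W _ => ?_
  have hWn : W.card ≤ n := Finset.card_le_univ W
  have hcond : (Wᶜ.card = n - j) ↔ W.card = j := by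
    rw [Finset.card_compl]
    omega
  by_cases h : W.card = j
  · rw [if_pos (hcond.mpr h), if_pos h, hc]
    let e : {a // ¬ a ∈ Wᶜ} ≃ {a // a ∈ W} :=
      Equiv.subtypeEquivRight (fun a => by simp)
    have hsub : (Matrix.of fun p q : {a // a ∈ W} => A p.1 q.1).submatrix e e =
        Matrix.of fun p q : {a // ¬ a ∈ Wᶜ} => A p.1 q.1 := by
      ext p q
      simp [e, Matrix.submatrix, Equiv.subtypeEquivRight]
      rfl
    have hdet : Matrix.det (Matrix.of fun p q : {a // ¬ a ∈ Wᶜ} => A p.1 q.1) =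
        Matrix.det (Matrix.of fun p q : {a // a ∈ W} => A p.1 q.1) := by
      rw [← Matrix.det_submatrix_equiv_self e (Matrix.of fun p q : {a // a ∈ W} => A p.1 q.1),
        hsub]
    have hcard : Fintype.card {a // ¬ a ∈ Wᶜ} = j := by
      rw [Fintype.card_congr e, Fintype.card_coe, h]
    show (-1 : ℂ) ^ (Fintype.card {a // ¬ a ∈ Wᶜ}) *
        Matrix.det (Matrix.of fun p q : {a // ¬ a ∈ Wᶜ} => A p.1 q.1) = _
    rw [hcard, hdet]
  · show (if Wᶜ.card = n - j then c Wᶜ else 0) = _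
    rw [if_neg (fun hh => h (hcond.mp hh)), if_neg h, mul_zero]

end Aux

section Aux2

lemma sum_powerset_neg_one_pow_card_complex {β : Type*} [DecidableEq β] (x : Finset β) :
    (∑ m ∈ x.powerset, (-1 : ℂ) ^ m.card) = if x = ∅ then 1 else 0 := by
  have h := congrArg (Int.cast : ℤ → ℂ) (Finset.sum_powerset_neg_one_pow_card (x := x))
  push_cast at h
  exact h

-- Lemma F : inclusion-exclusion indicator
lemma sum_indicator_subsets {β : Type*} [Fintype β] [DecidableEq β] (R : Finset β) :
    ∑ S : Finset β, (if R ⊆ S then ((-1 : ℂ)) ^ (Fintype.card β - S.card) else 0) =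
      if R = Finset.univ then 1 else 0 := by
  rw [Finset.sum_ite, Finset.sum_const_zero, add_zero]
  rw [show Finset.univ.filter (fun S => R ⊆ S) = Rᶜ.powerset.image (fun U => R ∪ U) from ?_]
  · rw [Finset.sum_image ?inj]
    case inj =>
      intro U hU V hV h
      rw [Finset.mem_coe, Finset.mem_powerset] at hU hV
      have hdU : Disjoint U R := Finset.disjoint_left.mpr fun a ha => Finset.mem_compl.mp (hU ha)
      have hdV : Disjoint V R := Finset.disjoint_left.mpr fun a ha => Finset.mem_compl.mp (hV ha)
      have hU' : U = (R ∪ U) \ R := by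
        rw [Finset.union_sdiff_left, Finset.sdiff_eq_self_iff_disjoint.mpr hdU]
      have hV' : V = (R ∪ V) \ R := by
        rw [Finset.union_sdiff_left, Finset.sdiff_eq_self_iff_disjoint.mpr hdV]
      rw [hU', hV', show R ∪ U = R ∪ V from h]
    have hcc : ∀ U ∈ Rᶜ.powerset, Fintype.card β - (R ∪ U).card = Rᶜ.card - U.card := by
      intro U hU
      rw [Finset.mem_powerset] at hU
      have hdU : Disjoint U R := Finset.disjoint_left.mpr fun a ha => Finset.mem_compl.mp (hU ha)
      rw [Finset.card_union_of_disjoint hdU.symm, Finset.card_compl]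
      have h3 : R.card + U.card ≤ Fintype.card β := by
        rw [← Finset.card_union_of_disjoint hdU.symm]
        exact Finset.card_le_univ _
      omega
    calc ∑ U ∈ Rᶜ.powerset, ((-1 : ℂ)) ^ (Fintype.card β - (R ∪ U).card)
        = ∑ U ∈ Rᶜ.powerset, ((-1 : ℂ)) ^ (Rᶜ.card - U.card) :=
          Finset.sum_congr rfl fun U hU => by rw [hcc U hU]
      _ = ∑ U ∈ Rᶜ.powerset, ((-1 : ℂ)) ^ Rᶜ.card * ((-1 : ℂ)) ^ U.card := by
          refine Finset.sum_congr rfl fun U hU => ?_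
          rw [Finset.mem_powerset] at hU
          have hle : U.card ≤ Rᶜ.card := Finset.card_le_card hU
          rw [← pow_add, neg_one_pow_eq_pow_mod_two, neg_one_pow_eq_pow_mod_two
            (n := Rᶜ.card + U.card)]
          congr 1
          omega
      _ = ((-1 : ℂ)) ^ Rᶜ.card * ∑ U ∈ Rᶜ.powerset, ((-1 : ℂ)) ^ U.card := by
          rw [Finset.mul_sum]
      _ = if R = Finset.univ then 1 else 0 := by
          rw [sum_powerset_neg_one_pow_card_complex]
          by_cases h : R = Finset.univ
          · simp [h, Finset.compl_eq_empty_iff]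
          · have h2 : ¬ Rᶜ = ∅ := fun hc => h ((Finset.compl_eq_empty_iff R).mp hc)
            simp [h, h2]
  · ext S
    simp only [Finset.mem_filter, Finset.mem_univ, true_and, Finset.mem_image,
      Finset.mem_powerset]
    constructor
    · intro hRS
      refine ⟨S \ R, fun a ha => ?_, by rw [Finset.union_sdiff_of_subset hRS]⟩
      rw [Finset.mem_sdiff] at ha
      exact Finset.mem_compl.mpr ha.2
    · rintro ⟨U, hU, rfl⟩
      exact Finset.subset_union_left

variable {ι' : Type*} [Fintype ι'] [DecidableEq ι']

-- counting lemma
lemma exists_non_increase {k j : ℕ} (blk : ι' → Fin k) (r : ι' → Fin j)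
    (T : Finset (Fin j))
    (hrT : T.card ≤ (Finset.univ.filter fun p : ι' => r p ∈ T).card)
    (a : Fin k)
    (hs : Fintype.card ι' < (Finset.univ.filter fun p => blk p = a).card + T.card)
    (π : Equiv.Perm ι') :
    ∃ p, r p ∈ T ∧ ¬ blk p < blk (π p) := by
  classical
  set I : Finset ι' := Finset.univ.filter fun p => blk p < blk (π p) with hI
  set L : Finset ι' := Finset.univ.filter fun p => blk p < a with hL
  set Hi : Finset ι' := Finset.univ.filter fun p => a < blk (π p) with hHidef
  have hIsub : I ⊆ L ∪ Hi := by
    intro p hp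
    rw [hI, Finset.mem_filter] at hp
    rcases lt_or_ge (blk p) a with h | h
    · exact Finset.mem_union_left _ (Finset.mem_filter.mpr ⟨Finset.mem_univ _, h⟩)
    · exact Finset.mem_union_right _
        (Finset.mem_filter.mpr ⟨Finset.mem_univ _, lt_of_le_of_lt h hp.2⟩)
  have hHi : Hi.card = (Finset.univ.filter fun q => a < blk q).card := by
    refine Finset.card_bij (fun p _ => π p) ?_ ?_ ?_
    · intro p hp
      rw [Finset.mem_filter] at hp ⊢
      exact ⟨Finset.mem_univ _, hp.2⟩
    · intro p _ q _ h
      exact π.injective h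
    · intro q hq
      rw [Finset.mem_filter] at hq
      exact ⟨π.symm q, Finset.mem_filter.mpr ⟨Finset.mem_univ _, by simpa using hq.2⟩, by simp⟩
  have hdisj1 : Disjoint L (Finset.univ.filter fun q => a < blk q) := by
    rw [Finset.disjoint_left]
    intro p hp hq
    rw [hL, Finset.mem_filter] at hp
    rw [Finset.mem_filter] at hq
    exact absurd (lt_trans hp.2 hq.2) (lt_irrefl _)
  have hdisj2 : Disjoint (L ∪ Finset.univ.filter fun q => a < blk q)
      (Finset.univ.filter fun p => blk p = a) := by
    rw [Finset.disjoint_left]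
    intro p hp hq
    rw [Finset.mem_filter] at hq
    rw [Finset.mem_union, hL, Finset.mem_filter, Finset.mem_filter] at hp
    rcases hp with h | h
    · exact absurd h.2 (by rw [hq.2]; exact lt_irrefl a)
    · exact absurd h.2 (by rw [hq.2]; exact lt_irrefl a)
  have hcards : L.card + (Finset.univ.filter fun q => a < blk q).card +
      (Finset.univ.filter fun p => blk p = a).card ≤ Fintype.card ι' := by
    rw [← Finset.card_union_of_disjoint hdisj1, ← Finset.card_union_of_disjoint hdisj2]
    rw [← Finset.card_univ]
    exact Finset.card_le_univ _
  have hIcard : I.card ≤ L.card + (Finset.univ.filter fun q => a < blk q).card := by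
    calc I.card ≤ (L ∪ Hi).card := Finset.card_le_card hIsub
      _ ≤ L.card + Hi.card := Finset.card_union_le _ _
      _ = _ := by rw [hHi]
  have hlt : I.card < (Finset.univ.filter fun p : ι' => r p ∈ T).card := by omega
  have hns : ¬ (Finset.univ.filter fun p : ι' => r p ∈ T) ⊆ I :=
    fun h => absurd (Finset.card_le_card h) (not_le.mpr hlt)
  obtain ⟨p, hp1, hp2⟩ := Finset.not_subset.mp hns
  rw [Finset.mem_filter] at hp1
  rw [hI, Finset.mem_filter] at hp2
  exact ⟨p, hp1.2, fun hc => hp2 ⟨Finset.mem_univ _, hc⟩⟩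

lemma card_preimage_of_bijective {j : ℕ} (r : ι' → Fin j) (hr : Function.Bijective r)
    (T : Finset (Fin j)) :
    (Finset.univ.filter fun p : ι' => r p ∈ T).card = T.card := by
  refine Finset.card_bij (fun p _ => r p) ?_ ?_ ?_
  · intro p hp
    exact (Finset.mem_filter.mp hp).2
  · intro p _ q _ h
    exact hr.1 h
  · intro t ht
    obtain ⟨p, rfl⟩ := hr.2 t
    exact ⟨p, Finset.mem_filter.mpr ⟨Finset.mem_univ _, ht⟩, rfl⟩

lemma det_eq_zero_of_blocks {k j : ℕ} (M : Matrix ι' ι' ℂ) (blk : ι' → Fin k)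
    (r : ι' → Fin j) (T : Finset (Fin j))
    (hrT : T.card ≤ (Finset.univ.filter fun p : ι' => r p ∈ T).card)
    (a : Fin k)
    (hs : Fintype.card ι' < (Finset.univ.filter fun p => blk p = a).card + T.card)
    (h0 : ∀ p q, r p ∈ T → ¬ blk p < blk q → M p q = 0) :
    M.det = 0 := by
  rw [Matrix.det_apply']
  refine Finset.sum_eq_zero fun σ _ => ?_
  obtain ⟨p, hpT, hpb⟩ := exists_non_increase blk r T hrT a hs σ⁻¹
  have hz : M (σ (σ⁻¹ p)) (σ⁻¹ p) = 0 := by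
    rw [show σ (σ⁻¹ p) = p from Equiv.apply_symm_apply σ p]
    exact h0 p (σ⁻¹ p) hpT hpb
  exact mul_eq_zero_of_right _ (Finset.prod_eq_zero (Finset.mem_univ (σ⁻¹ p)) hz)

lemma countP_bind' {α β : Type*} (s : Multiset α) (f : α → Multiset β) (p : β → Prop)
    [DecidablePred p] :
    Multiset.countP p (s.bind f) = (s.map (fun a => Multiset.countP p (f a))).sum := by
  induction s using Multiset.induction with
  | empty => simp
  | cons a s ih => simp [Multiset.cons_bind, ih]

lemma countP_interval (t c : ℕ) :
    Multiset.countP (· ≤ t) ((Multiset.range c).map (· + 1)) = min c t := by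
  rw [Multiset.countP_map]
  have h2 : (Finset.range c).filter (fun a => a + 1 ≤ t) = Finset.range (min c t) := by
    ext x
    simp only [Finset.mem_filter, Finset.mem_range, lt_min_iff]
    omega
  have h3 : Multiset.filter (fun a => a + 1 ≤ t) (Multiset.range c) =
      ((Finset.range c).filter (fun a => a + 1 ≤ t)).val := by
    rw [Finset.filter_val, Finset.range_val]
  rw [h3, h2, Finset.range_val, Multiset.card_range]

lemma sorted_countP_le (m : List ℕ) (hs : List.Pairwise (· ≤ ·) m) (i : ℕ) (hi : i < m.length)
    (t : ℕ) (ht : t < m.getD i 0) :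
    m.countP (fun x => x ≤ t) ≤ i := by
  have hsplit : m = m.take i ++ m.drop i := (List.take_append_drop i m).symm
  have hdropc : m.drop i = m.getD i 0 :: m.drop (i + 1) := by
    rw [List.getD_eq_getElem m 0 hi]
    exact List.drop_eq_getElem_cons hi
  have hzero : (m.drop i).countP (fun x => x ≤ t) = 0 := by
    rw [List.countP_eq_zero]
    intro x hx
    have hsd : List.Pairwise (· ≤ ·) (m.drop i) := hs.drop
    rw [hdropc] at hsd hx
    have hge : m.getD i 0 ≤ x := by
      rcases List.mem_cons.mp hx with h | h
      · omega
      · exact List.rel_of_pairwise_cons hsd h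
    simp only [decide_eq_true_eq]
    omega
  calc m.countP (fun x => x ≤ t)
      = (m.take i).countP (fun x => x ≤ t) + (m.drop i).countP (fun x => x ≤ t) := by
        conv_lhs => rw [hsplit]
        exact List.countP_append
    _ ≤ (m.take i).length + 0 := by rw [hzero]; exact Nat.add_le_add List.countP_le_length le_rfl
    _ ≤ i := by rw [List.length_take]; omega

lemma exists_big_block (k : ℕ) (nn : Fin k → ℕ) (m : List ℕ)
    (hm : m = Multiset.sort
      (Finset.univ.val.bind fun a : Fin k => Multiset.map (· + 1) (Multiset.range (nn a))) (· ≤ ·))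
    (j : ℕ) (hj : 1 ≤ j) (hjn : j ≤ Fintype.card ((a : Fin k) × Fin (nn a)))
    (W : Finset ((a : Fin k) × Fin (nn a))) (hW : W.card = j) :
    ∃ a : Fin k, m.getD (j - 1) 0 ≤ (W.filter fun y => y.1 = a).card := by
  classical
  set M0 : Multiset ℕ :=
    Finset.univ.val.bind (fun a : Fin k => Multiset.map (· + 1) (Multiset.range (nn a))) with hM0
  have hn : Fintype.card ((a : Fin k) × Fin (nn a)) = ∑ a, nn a := by
    simp [Fintype.card_sigma]
  have hlen : m.length = ∑ a, nn a := by
    rw [hm, Multiset.length_sort, hM0, Multiset.card_bind]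
    rw [Finset.sum_eq_multiset_sum]
    congr 1
    apply Multiset.map_congr rfl
    intro a _
    simp
  set mval := m.getD (j - 1) 0 with hmval
  have hidx : j - 1 < m.length := by omega
  have hmem : mval ∈ m := by
    rw [hmval, List.getD_eq_getElem m 0 hidx]
    exact List.getElem_mem hidx
  have hpos : 1 ≤ mval := by
    have : mval ∈ M0 := by
      rw [← Multiset.sort_eq M0 (· ≤ ·), ← hm]
      exact_mod_cast hmem
    rw [hM0] at this
    obtain ⟨a, _, hmem2⟩ := Multiset.mem_bind.mp this
    obtain ⟨x, _, hx⟩ := Multiset.mem_map.mp hmem2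
    omega
  by_contra hcon
  push_neg at hcon
  have hsum : ∑ a, (W.filter fun y => y.1 = a).card = j := by
    rw [← hW]
    exact (Finset.card_eq_sum_card_fiberwise (fun y _ => Finset.mem_univ y.1)).symm
  have hle1 : ∀ a, (W.filter fun y => y.1 = a).card ≤ nn a := by
    intro a
    refine le_trans (Finset.card_le_card_of_injOn (fun y => (y.2 : ℕ)) ?_ ?_)
      (le_of_eq (Finset.card_range (nn a)))
    · intro y hy
      rw [Finset.mem_coe, Finset.mem_filter] at hy
      rw [Finset.mem_coe, Finset.mem_range, ← hy.2]
      exact y.2.isLt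
    · intro y hy z hz hval
      rw [Finset.mem_coe, Finset.mem_filter] at hy hz
      obtain ⟨y1, y2⟩ := y
      obtain ⟨z1, z2⟩ := z
      have h1 : y1 = z1 := by
        simp only at hy hz
        rw [hy.2, hz.2]
      subst h1
      simp only at hval
      exact congrArg _ (Fin.ext hval)
  have hle2 : ∀ a, (W.filter fun y => y.1 = a).card ≤ min (nn a) (mval - 1) := fun a =>
    le_min (hle1 a) (by have := hcon a; omega)
  have hcount : Multiset.countP (· ≤ mval - 1) M0 = ∑ a, min (nn a) (mval - 1) := by
    rw [hM0, countP_bind', Finset.sum_eq_multiset_sum]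
    congr 1
    apply Multiset.map_congr rfl
    intro a _
    exact countP_interval _ _
  have hcount2 : Multiset.countP (· ≤ mval - 1) M0 = m.countP (fun x => x ≤ mval - 1) := by
    rw [← Multiset.sort_eq M0 (· ≤ ·), ← hm, Multiset.coe_countP]
  have hbound : m.countP (fun x => x ≤ mval - 1) ≤ j - 1 :=
    sorted_countP_le m (by rw [hm]; exact Multiset.pairwise_sort _ _) (j - 1) hidx (mval - 1)
      (by omega)
  have : j ≤ j - 1 := by
    calc j = ∑ a, (W.filter fun y => y.1 = a).card := hsum.symm
      _ ≤ ∑ a, min (nn a) (mval - 1) := Finset.sum_le_sum fun a _ => hle2 a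
      _ = Multiset.countP (· ≤ mval - 1) M0 := hcount.symm
      _ = m.countP (fun x => x ≤ mval - 1) := hcount2
      _ ≤ j - 1 := hbound
  omega

lemma det_sum_rows {ι : Type*} [Fintype ι] [DecidableEq ι] {j : ℕ} (Sf : Finset (Fin j))
    (y : Fin j → ι → ι → ℂ) :
    Matrix.det (Matrix.of fun p q : ι => ∑ i ∈ Sf, y i p q) =
      ∑ r ∈ Fintype.piFinset (fun _ : ι => Sf),
        Matrix.det (Matrix.of fun p q => y (r p) p q) := by
  have h := (Matrix.detRowAlternating (R := ℂ) (n := ι)).toMultilinearMap.map_sum_finset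
      (fun p i => fun q => y i p q) (fun _ : ι => Sf)
  have hrow : (fun p => ∑ i ∈ Sf, (fun q => y i p q)) = (fun p q => ∑ i ∈ Sf, y i p q) := by
    funext p q
    simp
  rw [hrow] at h
  exact h

lemma filter_attach_card {α : Type*} [DecidableEq α] (W : Finset α) (pred : α → Prop)
    [DecidablePred pred] :
    (Finset.univ.filter fun p : {y // y ∈ W} => pred p.1).card = (W.filter pred).card := by
  refine Finset.card_bij (fun p _ => p.1) ?_ ?_ ?_
  · intro p hp
    rw [Finset.mem_filter] at hp ⊢
    exact ⟨p.2, hp.2⟩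
  · intro p _ q _ h
    exact Subtype.ext h
  · intro z hz
    rw [Finset.mem_filter] at hz
    exact ⟨⟨z, hz.1⟩, Finset.mem_filter.mpr ⟨Finset.mem_univ _, hz.2⟩, rfl⟩

end Aux2

set_option maxHeartbeats 1000000 in
theorem polarization_eq_zero_of_nilpotent (k : ℕ) (nn : Fin k → ℕ) (hn : ∀ a, 0 < nn a)
    (m : List ℕ)
    (hm : m = Multiset.sort
      (Finset.univ.val.bind fun a : Fin k => Multiset.map (· + 1) (Multiset.range (nn a))) (· ≤ ·))
    (j : ℕ) (hj : 1 ≤ j) (hjn : j ≤ Fintype.card ((a : Fin k) × Fin (nn a)))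
    (x : Fin j → Matrix ((a : Fin k) × Fin (nn a)) ((a : Fin k) × Fin (nn a)) ℂ)
    (T : Finset (Fin j))
    (hT : ∀ i ∈ T, ∀ p q : (a : Fin k) × Fin (nn a), ¬ p.1 < q.1 → x i p q = 0)
    (hcard : j + 1 - m.getD (j - 1) 0 ≤ T.card) :
    polarization' j x = 0 := by
  classical
  suffices h : ∑ Sf : Finset (Fin j), (-1 : ℂ) ^ (j - Sf.card) * charCoeff' j (∑ i ∈ Sf, x i)
      = 0 by
    rw [polarization', h, mul_zero]
  have hC : ∀ Sf : Finset (Fin j), charCoeff' j (∑ i ∈ Sf, x i) =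
      (-1 : ℂ) ^ j * ∑ W : Finset ((a : Fin k) × Fin (nn a)),
        (if W.card = j then Matrix.det (Matrix.of fun p q : {y // y ∈ W} =>
          (∑ i ∈ Sf, x i) p.1 q.1) else 0) := fun Sf => charCoeff'_eq _ j hjn
  have step1 : ∑ Sf : Finset (Fin j), (-1 : ℂ) ^ (j - Sf.card) * charCoeff' j (∑ i ∈ Sf, x i)
      = ∑ Sf : Finset (Fin j), ∑ W : Finset ((a : Fin k) × Fin (nn a)),
          (-1 : ℂ) ^ (j - Sf.card) * ((-1 : ℂ) ^ j *
            (if W.card = j then Matrix.det (Matrix.of fun p q : {y // y ∈ W} =>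
              (∑ i ∈ Sf, x i) p.1 q.1) else 0)) := by
    refine Finset.sum_congr rfl fun Sf _ => ?_
    rw [hC Sf]
    simp only [Finset.mul_sum]
  rw [step1, Finset.sum_comm]
  refine Finset.sum_eq_zero fun W _ => ?_
  by_cases hWc : W.card = j
  swap
  · simp [hWc]
  simp only [if_pos hWc]
  -- expand determinant of the sum
  have hone : ∀ Sf : Finset (Fin j),
      Matrix.det (Matrix.of fun p q : {y // y ∈ W} => (∑ i ∈ Sf, x i) p.1 q.1) =
        ∑ r ∈ Fintype.piFinset (fun _ : {y // y ∈ W} => Sf),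
          Matrix.det (Matrix.of fun p q : {y // y ∈ W} => x (r p) p.1 q.1) := by
    intro Sf
    have hentry : (fun p q : {y // y ∈ W} => (∑ i ∈ Sf, x i) p.1 q.1) =
        (fun p q : {y // y ∈ W} => ∑ i ∈ Sf, x i p.1 q.1) := by
      funext p q
      rw [Matrix.sum_apply]
    rw [hentry]
    exact det_sum_rows Sf (fun i (p q : {y // y ∈ W}) => x i p.1 q.1)
  set Dr : ({y // y ∈ W} → Fin j) → ℂ :=
    fun r => Matrix.det (Matrix.of fun p q : {y // y ∈ W} => x (r p) p.1 q.1) with hDr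
  have step2 : ∀ Sf : Finset (Fin j),
      (-1 : ℂ) ^ (j - Sf.card) * ((-1 : ℂ) ^ j *
          Matrix.det (Matrix.of fun p q : {y // y ∈ W} => (∑ i ∈ Sf, x i) p.1 q.1)) =
      ∑ r : {y // y ∈ W} → Fin j,
        (if (∀ p, r p ∈ Sf) then (-1 : ℂ) ^ (j - Sf.card) * ((-1 : ℂ) ^ j * Dr r) else 0) := by
    intro Sf
    rw [hone Sf]
    rw [Finset.mul_sum, Finset.mul_sum]
    rw [show (∑ r : {y // y ∈ W} → Fin j,
        (if (∀ p, r p ∈ Sf) then (-1 : ℂ) ^ (j - Sf.card) * ((-1 : ℂ) ^ j * Dr r) else 0)) =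
        ∑ r : {y // y ∈ W} → Fin j,
        (if r ∈ Fintype.piFinset (fun _ : {y // y ∈ W} => Sf) then
          (-1 : ℂ) ^ (j - Sf.card) * ((-1 : ℂ) ^ j * Dr r) else 0) from
      Finset.sum_congr rfl fun r _ =>
        (if_congr (Iff.symm (Fintype.mem_piFinset)) rfl rfl)]
    rw [Fintype.sum_ite_mem]
  rw [show (∑ Sf : Finset (Fin j), (-1 : ℂ) ^ (j - Sf.card) * ((-1 : ℂ) ^ j *
      Matrix.det (Matrix.of fun p q : {y // y ∈ W} => (∑ i ∈ Sf, x i) p.1 q.1))) =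
      ∑ Sf : Finset (Fin j), ∑ r : {y // y ∈ W} → Fin j,
        (if (∀ p, r p ∈ Sf) then (-1 : ℂ) ^ (j - Sf.card) * ((-1 : ℂ) ^ j * Dr r) else 0) from
    Finset.sum_congr rfl fun Sf _ => step2 Sf]
  rw [Finset.sum_comm]
  refine Finset.sum_eq_zero fun r _ => ?_
  have step3 : ∑ Sf : Finset (Fin j),
      (if (∀ p, r p ∈ Sf) then (-1 : ℂ) ^ (j - Sf.card) * ((-1 : ℂ) ^ j * Dr r) else 0) =
      ((-1 : ℂ) ^ j * Dr r) * ∑ Sf : Finset (Fin j),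
        (if Finset.image r Finset.univ ⊆ Sf then
          (-1 : ℂ) ^ (Fintype.card (Fin j) - Sf.card) else 0) := by
    rw [Finset.mul_sum]
    refine Finset.sum_congr rfl fun Sf _ => ?_
    have hiff : (∀ p, r p ∈ Sf) ↔ Finset.image r Finset.univ ⊆ Sf := by
      rw [Finset.image_subset_iff]
      exact ⟨fun h p _ => h p, fun h p => h p (Finset.mem_univ p)⟩
    rw [Fintype.card_fin]
    by_cases hss : ∀ p, r p ∈ Sf
    · rw [if_pos hss, if_pos (hiff.mp hss)]
      ring
    · rw [if_neg hss, if_neg (fun hc => hss (hiff.mpr hc)), mul_zero]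
  rw [step3, sum_indicator_subsets]
  by_cases hsur : Finset.image r Finset.univ = Finset.univ
  swap
  · rw [if_neg hsur, mul_zero]
  rw [if_pos hsur, mul_one]
  -- now show Dr r = 0
  have hbij : Function.Bijective r := by
    rw [Fintype.bijective_iff_surjective_and_card]
    constructor
    · intro t
      have ht : t ∈ Finset.image r Finset.univ := hsur ▸ Finset.mem_univ t
      obtain ⟨p, _, hp⟩ := Finset.mem_image.mp ht
      exact ⟨p, hp⟩
    · rw [Fintype.card_fin]
      rw [← hWc]
      exact Fintype.card_coe W
  obtain ⟨a, ha⟩ := exists_big_block k nn m hm j hj hjn W hWc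
  have ha' : m.getD (j - 1) 0 ≤
      (Finset.univ.filter fun p : {y // y ∈ W} => p.1.1 = a).card := by
    rw [filter_attach_card W (fun y => y.1 = a)]
    exact ha
  have hDr0 : Dr r = 0 := by
    refine det_eq_zero_of_blocks _ (fun p => p.1.1) r T
      (le_of_eq (card_preimage_of_bijective r hbij T).symm) a ?_ ?_
    · have hWcard : Fintype.card {y // y ∈ W} = j := by
        rw [← hWc]
        exact Fintype.card_coe W
      rw [hWcard]
      show j < (Finset.univ.filter fun p : {y // y ∈ W} => p.1.1 = a).card + T.card
      omega
    · intro p q hpT hblk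
      exact hT (r p) hpT p.1 q.1 hblk
  rw [hDr0, mul_zero]
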